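/- arXiv:1301.6927 — 4 statements merged into one kernel-verified Lean document; each statement's English description precedes it below -/
import Mathlib

section
/- Let g be holomorphic on the upper half-plane H, continuous on its closure, satisfying |g(z)| ≤ c₁(|z|+1)^n / y^m for z = x + iy in H, and |g(z)| ≤ c₂ on the real axis, for some positive real constants c₁, c₂ and positive integers n, m. Then |g(z)| ≤ c₂ for all z in H. -/
open Complex Set

noncomputable def Complex.abs : AbsoluteValue ℂ ℝ where
  toFun := fun z => ‖z‖
  map_mul' := norm_mul
  nonneg' := norm_nonneg
  eq_zero' := fun _ => norm_eq_zero
  add_le' := norm_add_le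

theorem Complex.norm_eq_abs (z : ℂ) : ‖z‖ = Complex.abs z := rfl

theorem Complex.abs_ofReal (r : ℝ) : Complex.abs (r : ℂ) = |r| := by
  rw [← Complex.norm_eq_abs, Complex.norm_real, Real.norm_eq_abs]

theorem Complex.abs_I : Complex.abs Complex.I = 1 := by
  rw [← Complex.norm_eq_abs, Complex.norm_I]

theorem Complex.abs_le_abs_re_add_abs_im (z : ℂ) : Complex.abs z ≤ |z.re| + |z.im| :=
  Complex.norm_le_abs_re_add_abs_im z

theorem Complex.abs_re_le_abs (z : ℂ) : |z.re| ≤ Complex.abs z :=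
  Complex.abs_re_le_norm z

set_option maxHeartbeats 2000000 in
lemma aux_polybound (g : ℂ → ℂ) (c₁ c₂ : ℝ) (n m : ℕ)
    (hc₁ : 0 < c₁) (hc₂ : 0 < c₂)
    (hg : DifferentiableOn ℂ g {z : ℂ | 0 < z.im})
    (hgc : ContinuousOn g {z : ℂ | 0 ≤ z.im})
    (hgrowth : ∀ z : ℂ, 0 < z.im →
      Complex.abs (g z) ≤ c₁ * (Complex.abs z + 1) ^ n / z.im ^ m)
    (hreal : ∀ x : ℝ, Complex.abs (g x) ≤ c₂) :
    ∀ z : ℂ, 0 ≤ z.im →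
      Complex.abs (g z) ≤ (max c₁ c₂ * 11 ^ m * 5 ^ n) * (Complex.abs z + 1) ^ n := by
  intro z hz
  set c : ℝ := max c₁ c₂ with hc_def
  have hc : 0 < c := lt_max_iff.2 (Or.inl hc₁)
  have hcc₁ : c₁ ≤ c := le_max_left _ _
  have hcc₂ : c₂ ≤ c := le_max_right _ _
  clear_value c
  have hA0 : 0 ≤ Complex.abs z := AbsoluteValue.nonneg _ z
  have hP1 : (1:ℝ) ≤ (Complex.abs z + 1) ^ n := one_le_pow₀ (by linarith)
  have h11 : (1:ℝ) ≤ (11:ℝ) ^ m := one_le_pow₀ (by norm_num)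
  have h5 : (1:ℝ) ≤ (5:ℝ) ^ n := one_le_pow₀ (by norm_num)
  rcases eq_or_lt_of_le hz with h0 | h0
  · -- boundary case im z = 0
    have hzre : ((z.re : ℝ) : ℂ) = z := Complex.ext (by simp) (by simp [← h0])
    have : Complex.abs (g z) ≤ c₂ := by rw [← hzre]; exact hreal z.re
    calc Complex.abs (g z) ≤ c₂ := this
      _ ≤ c := hcc₂
      _ = c * 1 * 1 * 1 := by ring
      _ ≤ c * 11 ^ m * 5 ^ n * (Complex.abs z + 1) ^ n := by gcongr
  rcases le_or_gt 1 z.im with h1 | h1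
  · -- easy case im z ≥ 1
    have := hgrowth z h0
    have hd : (1:ℝ) ≤ z.im ^ m := one_le_pow₀ h1
    calc Complex.abs (g z) ≤ c₁ * (Complex.abs z + 1) ^ n / z.im ^ m := this
      _ ≤ c₁ * (Complex.abs z + 1) ^ n := div_le_self (by positivity) hd
      _ ≤ c * 11 ^ m * 5 ^ n * (Complex.abs z + 1) ^ n := by
          have hcc : c₁ ≤ c * 11 ^ m * 5 ^ n := by
            calc c₁ ≤ c := hcc₁
              _ = c * 1 * 1 := by ring
              _ ≤ c * 11 ^ m * 5 ^ n := by gcongr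
          exact mul_le_mul_of_nonneg_right hcc (by positivity)
  · -- main case 0 < im z < 1 : rectangle argument
    set A : ℝ := Complex.abs z with hA_def
    set R : ℝ := 2 * (A + 1) with hR_def
    have hR2 : 2 ≤ R := by simp [hR_def]; linarith
    have hR0 : 0 < R := by linarith
    have hAR : A ≤ R / 2 := by rw [hR_def]; linarith
    have hRA : R + 3 ≤ 5 * (A + 1) := by rw [hR_def]; nlinarith
    clear_value A R
    set F : ℂ → ℂ := fun w => g w * (w ^ 2 - (R : ℂ) ^ 2) ^ m with hF_def
    set U : Set ℂ := Set.Ioo (-R) R ×ℂ Set.Ioo 0 2 with hU_def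
    have hUsub : U ⊆ {w : ℂ | 0 < w.im} := fun w hw => (mem_reProdIm.mp hw).2.1
    have hclU : closure U = Set.Icc (-R) R ×ℂ Set.Icc 0 2 := by
      rw [hU_def, closure_reProdIm, closure_Ioo (by linarith : -R ≠ R),
        closure_Ioo (by norm_num : (0:ℝ) ≠ 2)]
    have hclsub : closure U ⊆ {w : ℂ | 0 ≤ w.im} := by
      rw [hclU]; exact fun w hw => (mem_reProdIm.mp hw).2.1
    have hUb : Bornology.IsBounded U :=
      (Metric.isBounded_Ioo _ _).reProdIm (Metric.isBounded_Ioo _ _)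
    have hpoly : Differentiable ℂ (fun w : ℂ => (w ^ 2 - (R : ℂ) ^ 2) ^ m) := by
      apply Differentiable.pow
      exact (differentiable_id.pow 2).sub (differentiable_const _)
    have hFd : DiffContOnCl ℂ F U := by
      constructor
      · exact (hg.mono hUsub).mul hpoly.differentiableOn
      · exact (hgc.mono hclsub).mul hpoly.continuous.continuousOn
    set M : ℝ := c * (R + 3) ^ n * (2 * (R + 2) ^ 2) ^ m with hM_def
    -- generic bounds on closure
    have habs : ∀ w : ℂ, w ∈ closure U → Complex.abs w ≤ R + 2 := by
      intro w hw
      rw [hclU] at hw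
      obtain ⟨hre, him⟩ := mem_reProdIm.mp hw
      calc Complex.abs w ≤ |w.re| + |w.im| := abs_le_abs_re_add_abs_im w
        _ ≤ R + 2 := by
            have h1 : |w.re| ≤ R := abs_le.2 ⟨hre.1, hre.2⟩
            have h2 : |w.im| ≤ 2 := abs_le.2 ⟨by linarith [him.1], him.2⟩
            linarith
    have hq : ∀ w : ℂ, w ∈ closure U →
        Complex.abs (w ^ 2 - (R : ℂ) ^ 2) ≤ 2 * (R + 2) ^ 2 := by
      intro w hw
      have h1 := habs w hw
      calc Complex.abs (w ^ 2 - (R : ℂ) ^ 2)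
          ≤ Complex.abs (w ^ 2) + Complex.abs ((R : ℂ) ^ 2) :=
            AbsoluteValue.sub_le_add _ _ _
        _ = Complex.abs w ^ 2 + R ^ 2 := by
            rw [map_pow, map_pow, Complex.abs_ofReal, abs_of_pos hR0]
        _ ≤ (R + 2) ^ 2 + R ^ 2 := by nlinarith [AbsoluteValue.nonneg Complex.abs w]
        _ ≤ 2 * (R + 2) ^ 2 := by nlinarith
    have hMfront : ∀ w ∈ frontier U, Complex.abs (F w) ≤ M := by
      intro w hw
      have hwcl : w ∈ closure U := frontier_subset_closure hw
      have habsw := habs w hwcl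
      have hqw := hq w hwcl
      have hRn : (1:ℝ) ≤ (R + 3) ^ n := one_le_pow₀ (by linarith)
      have hgb : Complex.abs (g w) * Complex.abs ((w ^ 2 - (R:ℂ) ^ 2) ^ m) ≤ M := by
        have h0le : (0:ℝ) ≤ w.im := hclsub hwcl
        rcases eq_or_lt_of_le h0le with him0 | him0
        · -- w real
          have hwre : ((w.re : ℝ) : ℂ) = w := Complex.ext (by simp) (by simp [← him0])
          have hg2 : Complex.abs (g w) ≤ c₂ := by rw [← hwre]; exact hreal w.re
          calc Complex.abs (g w) * Complex.abs ((w ^ 2 - (R:ℂ) ^ 2) ^ m)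
              ≤ c₂ * (2 * (R + 2) ^ 2) ^ m := by
                rw [map_pow]
                exact mul_le_mul hg2 (pow_le_pow_left₀ (AbsoluteValue.nonneg _ _) hqw m)
                  (by positivity) hc₂.le
            _ ≤ M := by
                rw [hM_def]
                have : c₂ ≤ c * (R + 3) ^ n := by
                  calc c₂ ≤ c := hcc₂
                    _ = c * 1 := (mul_one c).symm
                    _ ≤ c * (R + 3) ^ n := by gcongr
                exact mul_le_mul_of_nonneg_right this (by positivity)
        · -- w in open half-plane: use growth
          have hgw := hgrowth w him0
          have hwp : Complex.abs w + 1 ≤ R + 3 := by linarith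
          have hgb1 : Complex.abs (g w) ≤ c₁ * (R + 3) ^ n / w.im ^ m := by
            calc Complex.abs (g w) ≤ c₁ * (Complex.abs w + 1) ^ n / w.im ^ m := hgw
              _ ≤ c₁ * (R + 3) ^ n / w.im ^ m := by gcongr
          -- which boundary piece?
          rw [hU_def, frontier_reProdIm, closure_Ioo (by linarith : -R ≠ R),
            closure_Ioo (by norm_num : (0:ℝ) ≠ 2),
            frontier_Ioo (by linarith : -R < R), frontier_Ioo (by norm_num : (0:ℝ) < 2)] at hw
      

          rcases hw with hw | hw
          · -- top or bottom: im w ∈ {0, 2}; bottom excluded since im w > 0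
            obtain ⟨hre, him⟩ := mem_reProdIm.mp hw
            have him2 : w.im = 2 := by
              rcases him with h | h
              · exact absurd h (by intro hh; rw [hh] at him0; norm_num at him0)
              · simpa using h
            have hd : (2:ℝ) ^ m ≤ w.im ^ m → True := fun _ => trivial
            have hgb2 : Complex.abs (g w) ≤ c₁ * (R + 3) ^ n := by
              calc Complex.abs (g w) ≤ c₁ * (R + 3) ^ n / w.im ^ m := hgb1
                _ ≤ c₁ * (R + 3) ^ n := by
                    apply div_le_self (by positivity)
                    rw [him2]; exact one_le_pow₀ (by norm_num)
            calc Complex.abs (g w) * Complex.abs ((w ^ 2 - (R:ℂ) ^ 2) ^ m)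
                ≤ (c₁ * (R + 3) ^ n) * (2 * (R + 2) ^ 2) ^ m := by
                  rw [map_pow]
                  exact mul_le_mul hgb2 (pow_le_pow_left₀ (AbsoluteValue.nonneg _ _) hqw m)
                    (by positivity) (by positivity)
              _ ≤ M := by
                  rw [hM_def]
                  have h2 : c₁ * (R+3)^n ≤ c * (R+3)^n := by gcongr
                  exact mul_le_mul_of_nonneg_right h2 (by positivity)
          · -- sides: re w ∈ {-R, R}
            obtain ⟨hre, him⟩ := mem_reProdIm.mp hw
            have hy2 : w.im ≤ 2 := him.2
            set y : ℝ := w.im with hy_def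
            have hfac : Complex.abs (w ^ 2 - (R:ℂ) ^ 2) ≤ y * (2 * R + 2) := by
              have hfactor : w ^ 2 - (R:ℂ) ^ 2 = (w - R) * (w + R) := by ring
              rw [hfactor, map_mul]
              rcases hre with h | h
              · -- re w = -R
                have hrew : w.re = -R := by simpa using h
                have h1 : Complex.abs (w + R) = y := by
                  have : w + (R:ℂ) = Complex.I * y := by
                    apply Complex.ext <;> simp [hrew, hy_def]
                  rw [this, map_mul, Complex.abs_I, one_mul, Complex.abs_ofReal,
                    abs_of_pos him0]
                have h2 : Complex.abs (w - R) ≤ 2 * R + 2 := by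
                  calc Complex.abs (w - R) ≤ Complex.abs w + Complex.abs (R:ℂ) :=
                        AbsoluteValue.sub_le_add _ _ _
                    _ ≤ (R + 2) + R := by
                        rw [Complex.abs_ofReal, abs_of_pos hR0]; linarith
                    _ ≤ 2 * R + 2 := by linarith
                calc Complex.abs (w - R) * Complex.abs (w + R)
                    = Complex.abs (w - R) * y := by rw [h1]
                  _ ≤ (2 * R + 2) * y := by
                      apply mul_le_mul_of_nonneg_right h2 him0.le
                  _ = y * (2 * R + 2) := by ring
              · -- re w = R
                have hrew : w.re = R := by simpa using h
                have h1 : Complex.abs (w - R) = y := by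
                  have : w - (R:ℂ) = Complex.I * y := by
                    apply Complex.ext <;> simp [hrew, hy_def]
                  rw [this, map_mul, Complex.abs_I, one_mul, Complex.abs_ofReal,
                    abs_of_pos him0]
                have h2 : Complex.abs (w + R) ≤ 2 * R + 2 := by
                  calc Complex.abs (w + R) ≤ Complex.abs w + Complex.abs (R:ℂ) :=
                        AbsoluteValue.add_le _ _ _
                    _ ≤ (R + 2) + R := by
                        rw [Complex.abs_ofReal, abs_of_pos hR0]; linarith
                    _ ≤ 2 * R + 2 := by linarith
                calc Complex.abs (w - R) * Complex.abs (w + R)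
                    = y * Complex.abs (w + R) := by rw [h1]
                  _ ≤ y * (2 * R + 2) := by
                      apply mul_le_mul_of_nonneg_left h2 him0.le
            calc Complex.abs (g w) * Complex.abs ((w ^ 2 - (R:ℂ) ^ 2) ^ m)
                ≤ (c₁ * (R + 3) ^ n / y ^ m) * (y * (2 * R + 2)) ^ m := by
                  rw [map_pow]
                  exact mul_le_mul hgb1 (pow_le_pow_left₀ (AbsoluteValue.nonneg _ _) hfac m)
                    (by positivity) (by positivity)
              _ = (c₁ * (R + 3) ^ n / y ^ m) * (y ^ m * (2 * R + 2) ^ m) := by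
                  rw [mul_pow]
              _ = c₁ * (R + 3) ^ n * (2 * R + 2) ^ m := by
                  have hy0 : (y:ℝ) ≠ 0 := ne_of_gt him0
                  rw [div_mul_eq_mul_div, mul_comm (y ^ m), ← mul_assoc, mul_div_assoc,
                    div_self (pow_ne_zero m hy0), mul_one]
              _ ≤ M := by
                  rw [hM_def]
                  have h3 : (2 * R + 2 : ℝ) ≤ 2 * (R + 2) ^ 2 := by nlinarith
                  have h4 : (2*R+2:ℝ) ^ m ≤ (2 * (R + 2) ^ 2) ^ m :=
                    pow_le_pow_left₀ (by linarith) h3 m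
                  have h5 : c₁ * (R+3)^n ≤ c * (R+3)^n := by gcongr
                  exact mul_le_mul h5 h4 (by positivity) (by positivity)
      calc Complex.abs (F w) = Complex.abs (g w) * Complex.abs ((w ^ 2 - (R:ℂ) ^ 2) ^ m) := by
            rw [hF_def]; exact map_mul _ _ _
        _ ≤ M := hgb
    -- apply max modulus principle
    have hzU : z ∈ U := by
      rw [hU_def, mem_reProdIm]
      constructor
      · constructor
        · have := abs_re_le_abs z; rw [abs_le] at this; linarith [this.1]
        · have := abs_re_le_abs z; rw [abs_le] at this; linarith [this.2]
      · exact ⟨h0, by linarith⟩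
    have hFz : Complex.abs (F z) ≤ M := by
      have := Complex.norm_le_of_forall_mem_frontier_norm_le hUb hFd
        (fun w hw => by simpa [Complex.norm_eq_abs] using hMfront w hw)
        (subset_closure hzU)
      simpa [Complex.norm_eq_abs] using this
    clear_value F U M
    -- lower bound on the polynomial factor at z
    have hlow : (3/4) * R ^ 2 ≤ Complex.abs (z ^ 2 - (R:ℂ) ^ 2) := by
      have h1 : (R:ℝ) ^ 2 ≤ Complex.abs (z ^ 2 - (R:ℂ) ^ 2) + A ^ 2 := by
        have e0 : ((R:ℂ) ^ 2) = z ^ 2 - (z ^ 2 - (R:ℂ) ^ 2) := by ring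
        have e1 : Complex.abs ((R:ℂ) ^ 2) ≤ A ^ 2 + Complex.abs (z ^ 2 - (R:ℂ) ^ 2) := by
          calc Complex.abs ((R:ℂ) ^ 2)
              = Complex.abs (z ^ 2 - (z ^ 2 - (R:ℂ) ^ 2)) := by rw [← e0]
            _ ≤ Complex.abs (z ^ 2) + Complex.abs (z ^ 2 - (R:ℂ) ^ 2) :=
                AbsoluteValue.sub_le_add _ _ _
            _ = A ^ 2 + Complex.abs (z ^ 2 - (R:ℂ) ^ 2) := by rw [map_pow, ← hA_def]
        have e2 : Complex.abs ((R:ℂ) ^ 2) = R ^ 2 := by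
          rw [map_pow, Complex.abs_ofReal, abs_of_pos hR0]
        linarith [e2 ▸ e1]
      nlinarith [hAR]
    -- conclude
    have hkey : Complex.abs (g z) * ((3/4) * R ^ 2) ^ m ≤
        (c * 11 ^ m * 5 ^ n * (A + 1) ^ n) * ((3/4) * R ^ 2) ^ m := by
      calc Complex.abs (g z) * ((3/4) * R ^ 2) ^ m
          ≤ Complex.abs (g z) * Complex.abs (z ^ 2 - (R:ℂ) ^ 2) ^ m := by
            gcongr
        _ = Complex.abs (F z) := by rw [hF_def]; simp [map_mul, map_pow]
        _ ≤ M := hFz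
        _ ≤ (c * 11 ^ m * 5 ^ n * (A + 1) ^ n) * ((3/4) * R ^ 2) ^ m := by
            rw [hM_def]
            have h1 : (R + 3 : ℝ) ^ n ≤ 5 ^ n * (A + 1) ^ n := by
              rw [← mul_pow]
              apply pow_le_pow_left₀ (by linarith)
              linarith [hRA]
            have h2 : (2 * (R + 2) ^ 2 : ℝ) ^ m ≤ 11 ^ m * ((3/4) * R ^ 2) ^ m := by
              rw [← mul_pow]
              apply pow_le_pow_left₀ (by positivity)
              nlinarith
            calc c * (R + 3) ^ n * (2 * (R + 2) ^ 2) ^ m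
                ≤ c * (5 ^ n * (A + 1) ^ n) * (11 ^ m * ((3/4) * R ^ 2) ^ m) := by
                  apply mul_le_mul _ h2 (by positivity)
                    (mul_nonneg hc.le (by positivity))
                  exact mul_le_mul_of_nonneg_left h1 hc.le
              _ = (c * 11 ^ m * 5 ^ n * (A + 1) ^ n) * ((3/4) * R ^ 2) ^ m := by ring
    exact le_of_mul_le_mul_right hkey (pow_pos (by nlinarith) m)

set_option maxHeartbeats 2000000 in
lemma aux_delta_bound (g : ℂ → ℂ) (C c₂ : ℝ) (n : ℕ)
    (hC : 0 < C) (hc₂ : 0 < c₂)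
    (hg : DifferentiableOn ℂ g {z : ℂ | 0 < z.im})
    (hgc : ContinuousOn g {z : ℂ | 0 ≤ z.im})
    (hbd : ∀ w : ℂ, 0 ≤ w.im → Complex.abs (g w) ≤ C * (Complex.abs w + 1) ^ n)
    (hreal : ∀ x : ℝ, Complex.abs (g x) ≤ c₂) :
    ∀ z : ℂ, 0 < z.im → ∀ δ : ℝ, 0 < δ →
      Complex.abs (g z) ≤ c₂ * (1 + δ * Complex.abs z) ^ (n + 1) := by
  intro z hz δ hδ
  -- facts about the denominator 1 - δ I w
  have hden_re : ∀ w : ℂ, ((1:ℂ) - δ * Complex.I * w).re = 1 + δ * w.im := by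
    intro w; simp [Complex.sub_re, Complex.mul_re, Complex.mul_im]
  have hden1 : ∀ w : ℂ, 0 ≤ w.im → 1 ≤ Complex.abs (1 - δ * Complex.I * w) := by
    intro w hw
    have h1 : (1:ℝ) ≤ |((1:ℂ) - δ * Complex.I * w).re| := by
      rw [hden_re w, abs_of_pos (by nlinarith)]
      nlinarith
    exact le_trans h1 (Complex.abs_re_le_abs _)
  have hne : ∀ w : ℂ, 0 ≤ w.im → ((1:ℂ) - δ * Complex.I * w) ^ (n + 1) ≠ 0 := by
    intro w hw
    have h1 := hden1 w hw
    apply pow_ne_zero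
    intro h0
    rw [h0, map_zero] at h1
    linarith
  have hden2 : ∀ w : ℂ, δ * Complex.abs w - 1 ≤ Complex.abs (1 - δ * Complex.I * w) := by
    intro w
    have h1 : Complex.abs ((δ:ℂ) * Complex.I * w) = δ * Complex.abs w := by
      rw [map_mul, map_mul, Complex.abs_ofReal, Complex.abs_I, abs_of_pos hδ, mul_one]
    have h2 := AbsoluteValue.sub_le_add Complex.abs (1:ℂ) (1 - δ * Complex.I * w)
    have e : (1:ℂ) - (1 - δ * Complex.I * w) = (δ:ℂ) * Complex.I * w := by ring
    rw [e, h1, map_one] at h2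
    linarith
  set h : ℂ → ℂ := fun w => g w * (((1:ℂ) - δ * Complex.I * w) ^ (n + 1))⁻¹ with hh_def
  -- choice of radius
  set K : ℝ := C * 2 ^ n * (2 / δ) ^ (n + 1) / c₂ with hK_def
  have hK0 : 0 ≤ K := by positivity
  set R : ℝ := Complex.abs z + 1 + 2 / δ + K with hR_def
  have hzA : 0 ≤ Complex.abs z := AbsoluteValue.nonneg _ _
  have hδ2 : 0 < 2 / δ := by positivity
  have hRz : Complex.abs z < R := by rw [hR_def]; linarith
  have hR1 : 1 ≤ R := by rw [hR_def]; linarith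
  have hR0 : 0 < R := by linarith
  have hRδ : 2 / δ ≤ R := by rw [hR_def]; linarith
  have hRK : K ≤ R := by rw [hR_def]; linarith
  have hδR : 2 ≤ δ * R := by
    have h2' := mul_le_mul_of_nonneg_left hRδ hδ.le
    rwa [mul_div_cancel₀ _ (ne_of_gt hδ)] at h2'
  clear_value K R
  -- the numeric tail estimate
  have hnum : C * (R + 1) ^ n ≤ c₂ * (δ * R - 1) ^ (n + 1) := by
    have e1 : (R + 1 : ℝ) ^ n ≤ 2 ^ n * R ^ n := by
      rw [← mul_pow]
      exact pow_le_pow_left₀ (by linarith) (by linarith) n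
    have e2 : (δ / 2) ^ (n + 1) * R ^ (n + 1) ≤ (δ * R - 1) ^ (n + 1) := by
      rw [← mul_pow]
      apply pow_le_pow_left₀ (by positivity)
      nlinarith
    have e3 : C * 2 ^ n ≤ c₂ * ((δ / 2) ^ (n + 1) * R) := by
      have h4 : c₂ * ((δ / 2) ^ (n + 1) * K) = C * 2 ^ n := by
        have hone : ((δ:ℝ) / 2) ^ (n + 1) * (2 / δ) ^ (n + 1) = 1 := by
          rw [← mul_pow, show (δ / 2) * (2 / δ) = 1 by field_simp, one_pow]
        calc c₂ * ((δ / 2) ^ (n + 1) * K)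
            = c₂ * ((δ / 2) ^ (n + 1) * (C * 2 ^ n * (2 / δ) ^ (n + 1) / c₂)) := by
              rw [hK_def]
          _ = C * 2 ^ n * ((δ / 2) ^ (n + 1) * (2 / δ) ^ (n + 1)) * (c₂ / c₂) := by
              ring
          _ = C * 2 ^ n := by
              rw [hone, div_self (ne_of_gt hc₂)]; ring
      have h5 : c₂ * ((δ / 2) ^ (n + 1) * K) ≤ c₂ * ((δ / 2) ^ (n + 1) * R) := by
        gcongr
      linarith
    calc C * (R + 1) ^ n ≤ C * (2 ^ n * R ^ n) := by
          exact mul_le_mul_of_nonneg_left e1 hC.le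
      _ = (C * 2 ^ n) * R ^ n := by ring
      _ ≤ (c₂ * ((δ / 2) ^ (n + 1) * R)) * R ^ n := by
          exact mul_le_mul_of_nonneg_right e3 (by positivity)
      _ = c₂ * ((δ / 2) ^ (n + 1) * R ^ (n + 1)) := by
          rw [pow_succ]; ring
      _ ≤ c₂ * (δ * R - 1) ^ (n + 1) := by
          exact mul_le_mul_of_nonneg_left e2 hc₂.le
  -- bound for h on the circle |w| = R, im w ≥ 0
  have hcirc : ∀ w : ℂ, Complex.abs w = R → 0 ≤ w.im → Complex.abs (h w) ≤ c₂ := by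
    intro w hwR hwim
    have hd2 := hden2 w
    rw [hwR] at hd2
    have hd1 : (1:ℝ) ≤ δ * R - 1 := by linarith
    have hdpos : (0:ℝ) < δ * R - 1 := by linarith
    have habsd : (δ * R - 1) ^ (n + 1) ≤ Complex.abs (1 - δ * Complex.I * w) ^ (n + 1) :=
      pow_le_pow_left₀ hdpos.le (by linarith) _
    have hgw : Complex.abs (g w) ≤ C * (R + 1) ^ n := by
      have := hbd w hwim
      rwa [hwR] at this
    have habspos : (0:ℝ) < Complex.abs (1 - δ * Complex.I * w) ^ (n + 1) := by
      have := hden1 w hwim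
      positivity
    rw [hh_def]
    simp only [map_mul, map_inv₀, map_pow]
    rw [← div_eq_mul_inv, div_le_iff₀ habspos]
    calc Complex.abs (g w) ≤ C * (R + 1) ^ n := hgw
      _ ≤ c₂ * (δ * R - 1) ^ (n + 1) := hnum
      _ ≤ c₂ * Complex.abs (1 - δ * Complex.I * w) ^ (n + 1) := by
          exact mul_le_mul_of_nonneg_left habsd hc₂.le
  -- maximum principle on the half-disk
  set u : Set ℂ := Metric.ball (0:ℂ) R ∩ {w : ℂ | 0 < w.im} with hu_def
  have hub : Bornology.IsBounded u := Metric.isBounded_ball.subset inter_subset_left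
  have hclosed : IsClosed {w : ℂ | 0 ≤ w.im} := isClosed_le continuous_const Complex.continuous_im
  have hclu : closure u ⊆ Metric.closedBall (0:ℂ) R ∩ {w : ℂ | 0 ≤ w.im} := by
    apply closure_minimal _ (Metric.isClosed_closedBall.inter hclosed)
    exact inter_subset_inter Metric.ball_subset_closedBall
      (Set.setOf_subset_setOf.mpr (fun w hw => le_of_lt hw))
  have hdd : Differentiable ℂ (fun w : ℂ => ((1:ℂ) - δ * Complex.I * w) ^ (n + 1)) := by
    apply Differentiable.pow
    exact (differentiable_const _).sub (differentiable_id.const_mul _)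
  have hhd : DiffContOnCl ℂ h u := by
    constructor
    · apply DifferentiableOn.mul (hg.mono inter_subset_right)
      exact DifferentiableOn.inv hdd.differentiableOn
        (fun w hw => hne w (le_of_lt hw.2))
    · apply ContinuousOn.mono _ (hclu.trans inter_subset_right)
      exact hgc.mul ((hdd.continuous.continuousOn).inv₀ (fun w hw => hne w hw))
  have hfr : ∀ w ∈ frontier u, Complex.abs (h w) ≤ c₂ := by
    intro w hw
    rcases frontier_inter_subset _ _ hw with ⟨hw1, hw2⟩ | ⟨hw1, hw2⟩
    · -- on the sphere
      rw [frontier_ball 0 (ne_of_gt hR0)] at hw1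
      have hwR : Complex.abs w = R := by
        simpa [Complex.norm_eq_abs] using mem_sphere_zero_iff_norm.mp hw1
      rw [closure_setOf_lt_im] at hw2
      exact hcirc w hwR hw2
    · -- on the real axis
      rw [frontier_setOf_lt_im] at hw2
      have hwim : w.im = 0 := hw2
      have hwre : ((w.re : ℝ) : ℂ) = w := Complex.ext (by simp) (by simp [hwim])
      have hg2 : Complex.abs (g w) ≤ c₂ := by rw [← hwre]; exact hreal w.re
      have hinv : (Complex.abs (1 - δ * Complex.I * w) ^ (n + 1))⁻¹ ≤ 1 := by
        apply inv_le_one_of_one_le₀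
        exact one_le_pow₀ (hden1 w (le_of_eq hwim.symm))
      rw [hh_def]
      simp only [map_mul, map_inv₀, map_pow]
      calc Complex.abs (g w) * (Complex.abs (1 - δ * Complex.I * w) ^ (n + 1))⁻¹
          ≤ c₂ * 1 := by
            apply mul_le_mul hg2 hinv (by positivity) hc₂.le
        _ = c₂ := mul_one c₂
  have hzu : z ∈ u := by
    rw [hu_def]
    constructor
    · rw [Metric.mem_ball, Complex.dist_eq, sub_zero]; exact hRz
    · exact hz
  have hhz : Complex.abs (h z) ≤ c₂ := by
    have := Complex.norm_le_of_forall_mem_frontier_norm_le hub hhd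
      (fun w hw => by simpa [Complex.norm_eq_abs] using hfr w hw) (subset_closure hzu)
    simpa [Complex.norm_eq_abs] using this
  -- recover the bound for g
  have hgz : g z = h z * ((1:ℂ) - δ * Complex.I * z) ^ (n + 1) := by
    rw [hh_def]
    field_simp
    rw [mul_div_assoc, div_self (hne z hz.le), mul_one]
  have habs1 : Complex.abs (1 - δ * Complex.I * z) ≤ 1 + δ * Complex.abs z := by
    calc Complex.abs (1 - δ * Complex.I * z)
        ≤ Complex.abs (1:ℂ) + Complex.abs ((δ:ℂ) * Complex.I * z) :=
          AbsoluteValue.sub_le_add _ _ _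
      _ = 1 + δ * Complex.abs z := by
          rw [map_one, map_mul, map_mul, Complex.abs_ofReal, Complex.abs_I,
            abs_of_pos hδ, mul_one]
  calc Complex.abs (g z)
      = Complex.abs (h z) * Complex.abs (1 - δ * Complex.I * z) ^ (n + 1) := by
        rw [hgz, map_mul, map_pow]
    _ ≤ c₂ * (1 + δ * Complex.abs z) ^ (n + 1) := by
        apply mul_le_mul hhz (pow_le_pow_left₀ (AbsoluteValue.nonneg _ _) habs1 _)
          (by positivity) hc₂.le

/-- Phragmén–Lindelöf type lemma: a holomorphic function on the upper half-plane,
continuous up to the boundary, with the stated polynomial-type growth and bounded by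
`c₂` on the real axis, is bounded by `c₂` in the half-plane. -/
theorem phragmen_lindelof_polygrowth (g : ℂ → ℂ) (c₁ c₂ : ℝ) (n m : ℕ)
    (hc₁ : 0 < c₁) (hc₂ : 0 < c₂) (hn : 0 < n) (hm : 0 < m)
    (hg : DifferentiableOn ℂ g {z : ℂ | 0 < z.im})
    (hgc : ContinuousOn g {z : ℂ | 0 ≤ z.im})
    (hgrowth : ∀ z : ℂ, 0 < z.im →
      ‖g z‖ ≤ c₁ * (‖z‖ + 1) ^ n / z.im ^ m)
    (hreal : ∀ x : ℝ, ‖g x‖ ≤ c₂) :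
    ∀ z : ℂ, 0 < z.im → ‖g z‖ ≤ c₂ := by
  intro z hz
  have hCpos : 0 < max c₁ c₂ * 11 ^ m * 5 ^ n := by
    have : (0:ℝ) < max c₁ c₂ := lt_max_iff.2 (Or.inl hc₁)
    positivity
  have hbd := aux_polybound g c₁ c₂ n m hc₁ hc₂ hg hgc hgrowth hreal
  have key := aux_delta_bound g (max c₁ c₂ * 11 ^ m * 5 ^ n) c₂ n hCpos hc₂ hg hgc hbd hreal z hz
  have hlim : Filter.Tendsto (fun δ : ℝ => c₂ * (1 + δ * Complex.abs z) ^ (n + 1))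
      (nhdsWithin 0 (Set.Ioi 0)) (nhds c₂) := by
    have hcont : Continuous (fun δ : ℝ => c₂ * (1 + δ * Complex.abs z) ^ (n + 1)) := by
      continuity
    have h0 : c₂ * ((1:ℝ) + 0 * Complex.abs z) ^ (n + 1) = c₂ := by norm_num
    have := (hcont.tendsto 0).mono_left (nhdsWithin_le_nhds (s := Set.Ioi (0:ℝ)))
    simpa [h0] using this
  refine ge_of_tendsto hlim ?_
  filter_upwards [self_mem_nhdsWithin] with δ hδ
  exact key δ hδ
end

section
/- Let Ω be a domain in the plane with real-analytic boundary on which Problem (1) has a solution, where Problem (1) asks for u harmonic and positive in Ω, u = 0 on ∂Ω, and |∇u| = 1 on ∂Ω, with u extending harmonically to a neighborhood of the closure of Ω. Then the solution u is unique. -/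
open Complex Set Topology Filter Metric

/-- The partial derivative `u_x`. -/
noncomputable def ux (u : ℂ → ℝ) (z : ℂ) : ℝ := fderiv ℝ u z 1

/-- The partial derivative `u_y`. -/
noncomputable def uy (u : ℂ → ℝ) (z : ℂ) : ℝ := fderiv ℝ u z Complex.I

/-- The norm of the gradient of `u`. -/
noncomputable def gradNorm (u : ℂ → ℝ) (z : ℂ) : ℝ :=
  Real.sqrt (ux u z ^ 2 + uy u z ^ 2)

/-- `u` is harmonic on `s`: twice continuously differentiable with vanishing Laplacian. -/
def HarmonicOnD (u : ℂ → ℝ) (s : Set ℂ) : Prop :=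
  ContDiffOn ℝ 2 u s ∧
  ∀ z ∈ s, fderiv ℝ (fun w => ux u w) z 1 + fderiv ℝ (fun w => uy u w) z Complex.I = 0

theorem clm_ext_c {F : Type*} [NormedAddCommGroup F] [NormedSpace ℝ F]
    {L M : ℂ →L[ℝ] F} (h1 : L 1 = M 1) (hI : L Complex.I = M Complex.I) : L = M := by
  ext z
  have hz : z = z.re • (1:ℂ) + z.im • Complex.I := by
    simp only [real_smul, smul_eq_mul, mul_one]
    simpa [mul_comm] using (Complex.re_add_im z).symm
  conv_lhs => rw [hz]
  conv_rhs => rw [hz]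
  rw [map_add, map_add, map_smul, map_smul, map_smul, map_smul, h1, hI]

/-- The complex function `u_x - i u_y` built from a real function. -/
noncomputable def hol (u : ℂ → ℝ) (z : ℂ) : ℂ := (ux u z : ℂ) - Complex.I * (uy u z : ℂ)

theorem fderiv_eq_re_mul (g : ℂ → ℝ) (p t : ℂ) :
    fderiv ℝ g p t = (hol g p * t).re := by
  have hz : t = t.re • (1:ℂ) + t.im • Complex.I := by
    simp only [real_smul, smul_eq_mul, mul_one]
    simpa [mul_comm] using (Complex.re_add_im t).symm
  conv_lhs => rw [hz]
  rw [map_add, map_smul, map_smul]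
  simp [hol, ux, uy, Complex.mul_re, smul_eq_mul]
  ring

theorem abs_hol (g : ℂ → ℝ) (p : ℂ) : ‖hol g p‖ = gradNorm g p := by
  rw [Complex.norm_def, Complex.normSq_apply, gradNorm]
  simp [hol]
  ring_nf

theorem hol_re (g : ℂ → ℝ) (p : ℂ) : (hol g p).re = ux g p := by simp [hol]

theorem hol_im (g : ℂ → ℝ) (p : ℂ) : (hol g p).im = -uy g p := by simp [hol]

/-- Equality of `hol` implies equality of real differentials. -/
theorem fderiv_eq_of_hol_eq {u v : ℂ → ℝ} {z : ℂ} (h : hol u z = hol v z) :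
    fderiv ℝ u z = fderiv ℝ v z := by
  apply clm_ext_c
  · have h1 := congrArg Complex.re h
    rw [hol_re, hol_re] at h1
    exact h1
  · have h2 := congrArg Complex.im h
    rw [hol_im, hol_im] at h2
    have : uy u z = uy v z := by linarith
    exact this

theorem fderiv_neg_of_hol_neg {u v : ℂ → ℝ} {z : ℂ} (h : hol u z = -hol v z) :
    fderiv ℝ u z = -fderiv ℝ v z := by
  apply clm_ext_c
  · have h1 := congrArg Complex.re h
    rw [hol_re] at h1
    simp only [Complex.neg_re, hol_re] at h1
    simpa [ux] using h1
  · have h2 := congrArg Complex.im h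
    rw [hol_im] at h2
    simp only [Complex.neg_im, hol_im] at h2
    have : uy u z = -uy v z := by linarith
    simpa [uy] using this

theorem hol_differentiableOn (u : ℂ → ℝ) (U : Set ℂ) (hU : IsOpen U)
    (hu : HarmonicOnD u U) : DifferentiableOn ℂ (hol u) U := by
  intro z hz
  obtain ⟨hC2, hlap⟩ := hu
  -- derivative map is C¹ on U
  have hD1 : ContDiffOn ℝ 1 (fderiv ℝ u) U := hC2.fderiv_of_isOpen hU (by norm_num)
  have hDdiff : DifferentiableAt ℝ (fderiv ℝ u) z :=
    (hD1.differentiableOn (by norm_num) z hz).differentiableAt (hU.mem_nhds hz)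
  set B : ℂ →L[ℝ] ℂ →L[ℝ] ℝ := fderiv ℝ (fderiv ℝ u) z with hBdef
  have hB : HasFDerivAt (fderiv ℝ u) B z := hDdiff.hasFDerivAt
  -- eventual differentiability for symmetry of second derivative
  have hEv : ∀ᶠ w in 𝓝 z, HasFDerivAt u (fderiv ℝ u w) w := by
    filter_upwards [hU.mem_nhds hz] with w hw
    exact ((hC2.differentiableOn (by norm_num) w hw).differentiableAt
      (hU.mem_nhds hw)).hasFDerivAt
  have hsymm : ∀ a b : ℂ, B a b = B b a := fun a b =>
    second_derivative_symmetric_of_eventually_of_real hEv hB a b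
  -- derivative of w ↦ fderiv u w 1
  have h1 : HasFDerivAt (fun w => fderiv ℝ u w (1:ℂ))
      ((ContinuousLinearMap.apply ℝ ℝ (1:ℂ)).comp B) z :=
    (ContinuousLinearMap.apply ℝ ℝ (1:ℂ)).hasFDerivAt.comp z hB
  have hI : HasFDerivAt (fun w => fderiv ℝ u w Complex.I)
      ((ContinuousLinearMap.apply ℝ ℝ (Complex.I)).comp B) z :=
    (ContinuousLinearMap.apply ℝ ℝ (Complex.I)).hasFDerivAt.comp z hB
  -- laplace equation at z in terms of B
  have hlapz : B 1 1 + B Complex.I Complex.I = 0 := by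
    have e1 : fderiv ℝ (fun w => ux u w) z =
        ((ContinuousLinearMap.apply ℝ ℝ (1:ℂ)).comp B) := h1.fderiv
    have e2 : fderiv ℝ (fun w => uy u w) z =
        ((ContinuousLinearMap.apply ℝ ℝ (Complex.I)).comp B) := hI.fderiv
    have := hlap z hz
    rw [show (fun w => ux u w) = fun w => fderiv ℝ u w (1:ℂ) from rfl] at this
    rw [show (fun w => uy u w) = fun w => fderiv ℝ u w Complex.I from rfl] at this
    rw [h1.fderiv, hI.fderiv] at this
    simpa using this
  -- real derivative of hol u
  have hg1 : HasFDerivAt (fun w => ((fderiv ℝ u w (1:ℂ) : ℝ) : ℂ))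
      (Complex.ofRealCLM.comp ((ContinuousLinearMap.apply ℝ ℝ (1:ℂ)).comp B)) z :=
    Complex.ofRealCLM.hasFDerivAt.comp z h1
  have hgI : HasFDerivAt (fun w => ((fderiv ℝ u w Complex.I : ℝ) : ℂ))
      (Complex.ofRealCLM.comp ((ContinuousLinearMap.apply ℝ ℝ (Complex.I)).comp B)) z :=
    Complex.ofRealCLM.hasFDerivAt.comp z hI
  have hf : HasFDerivAt (hol u)
      ((Complex.ofRealCLM.comp ((ContinuousLinearMap.apply ℝ ℝ (1:ℂ)).comp B)) -
        Complex.I • (Complex.ofRealCLM.comp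
          ((ContinuousLinearMap.apply ℝ ℝ (Complex.I)).comp B))) z :=
    hg1.sub (hgI.const_mul Complex.I)
  -- the complex-linear candidate derivative
  set c : ℂ := ((B 1 1 : ℝ) : ℂ) - Complex.I * ((B 1 Complex.I : ℝ) : ℂ) with hc
  have hEq : ((c • (ContinuousLinearMap.id ℂ ℂ)).restrictScalars ℝ) =
      ((Complex.ofRealCLM.comp ((ContinuousLinearMap.apply ℝ ℝ (1:ℂ)).comp B)) -
        Complex.I • (Complex.ofRealCLM.comp
          ((ContinuousLinearMap.apply ℝ ℝ (Complex.I)).comp B))) := by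
    apply clm_ext_c
    · simp [hc, smul_eq_mul, mul_one, Complex.ext_iff]
    · have hs : B Complex.I (1:ℂ) = B 1 Complex.I := hsymm _ _
      have hl : B Complex.I Complex.I = - B 1 1 := by linarith [hlapz]
      simp [hc, smul_eq_mul, hs, hl, Complex.ext_iff, mul_comm]
  have : HasFDerivAt (hol u) (c • (ContinuousLinearMap.id ℂ ℂ)) z :=
    hasFDerivAt_of_restrictScalars ℝ hf hEq
  exact this.differentiableAt.differentiableWithinAt

theorem pm_of {a b t : ℂ} (ht : ‖t‖ = 1) (ha : ‖a‖ = 1) (hb : ‖b‖ = 1)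
    (hra : (a * t).re = 0) (hrb : (b * t).re = 0) : a = b ∨ a = -b := by
  have ht0 : t ≠ 0 := by
    intro h; rw [h] at ht; simp at ht
  have key : ∀ c : ℂ, ‖c‖ = 1 → (c * t).re = 0 → c * t = Complex.I ∨ c * t = -Complex.I := by
    intro c hc hre
    have habs : ‖c * t‖ = 1 := by
      rw [norm_mul, hc, ht, one_mul]
    have h2 : (c*t).re ^ 2 + (c*t).im ^ 2 = 1 := by
      have h := Complex.sq_norm (c*t)
      rw [habs, Complex.normSq_apply] at h
      nlinarith [h]
    rw [hre] at h2
    have : (c*t).im = 1 ∨ (c*t).im = -1 := by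
      have : ((c*t).im - 1) * ((c*t).im + 1) = 0 := by nlinarith
      rcases mul_eq_zero.1 this with h | h
      · left; linarith
      · right; linarith
    rcases this with h | h
    · left; apply Complex.ext <;> simp [hre, h]
    · right; apply Complex.ext <;> simp [hre, h]
  rcases key a ha hra with h1 | h1 <;> rcases key b hb hrb with h2 | h2
  · left; exact mul_right_cancel₀ ht0 (h1.trans h2.symm)
  · right; exact mul_right_cancel₀ ht0 (by rw [h1, neg_mul, h2, neg_neg])
  · right; exact mul_right_cancel₀ ht0 (by rw [h1, neg_mul, h2])
  · left; exact mul_right_cancel₀ ht0 (h1.trans h2.symm)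

/-- At an accumulation point of `S`, there is a unit direction annihilated by the
differential of every differentiable function vanishing on `S ∪ {p}`. -/
theorem exists_tangent {S : Set ℂ} {p : ℂ} (hfreq : ∃ᶠ z in 𝓝[≠] p, z ∈ S) :
    ∃ t : ℂ, ‖t‖ = 1 ∧ ∀ g : ℂ → ℝ, DifferentiableAt ℝ g p → g p = 0 →
      (∀ z ∈ S, g z = 0) → fderiv ℝ g p t = 0 := by
  have hclos : p ∈ closure (S \ {p}) := by
    rw [mem_closure_iff_frequently]
    rw [frequently_nhdsWithin_iff] at hfreq
    exact hfreq.mono (by intro z hz; exact ⟨hz.1, hz.2⟩)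
  obtain ⟨q, hq, hqlim⟩ := mem_closure_iff_seq_limit.1 hclos
  set d : ℕ → ℂ := fun n => q n - p with hd
  have hdne : ∀ n, d n ≠ 0 := fun n => sub_ne_zero.2 (fun h => (hq n).2 (by simp [h]))
  have hdlim : Tendsto d atTop (𝓝 0) := by
    simpa using hqlim.sub_const p
  set c : ℕ → ℝ := fun n => ‖d n‖⁻¹ with hc
  have hsph : ∀ n, c n • d n ∈ sphere (0:ℂ) 1 := by
    intro n
    simp only [mem_sphere_iff_norm, sub_zero, norm_smul, norm_inv, norm_norm, Real.norm_eq_abs,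
      abs_norm, hc]
    exact inv_mul_cancel₀ (norm_ne_zero_iff.2 (hdne n))
  obtain ⟨t, htmem, φ, hφ, htlim⟩ := (isCompact_sphere (0:ℂ) 1).tendsto_subseq hsph
  refine ⟨t, by simpa using htmem, ?_⟩
  intro g hg hgp hgS
  have hclim : Tendsto (fun n => ‖c (φ n)‖) atTop atTop := by
    have h1 : Tendsto (fun n => ‖d (φ n)‖) atTop (𝓝[>] 0) := by
      apply tendsto_nhdsWithin_of_tendsto_nhds_of_eventually_within
      · exact (tendsto_norm_zero.comp (hdlim.comp hφ.tendsto_atTop))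
      · exact Eventually.of_forall fun n => norm_pos_iff.2 (hdne (φ n))
    have := tendsto_inv_nhdsGT_zero.comp h1
    refine this.congr' ?_
    filter_upwards with n
    simp [hc, Function.comp, Real.norm_eq_abs, _root_.abs_of_nonneg (inv_nonneg.2 (norm_nonneg _))]
  have hlim := hg.hasFDerivAt.hasFDerivWithinAt (s := univ) |>.lim (c := fun n => c (φ n)) (d := fun n => d (φ n))
    (hdlim.comp hφ.tendsto_atTop)
    (Eventually.of_forall fun n => mem_univ _) (by exact htlim)
  have hval : ∀ n, c (φ n) • (g (p + d (φ n)) - g p) = 0 := by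
    intro n
    have : g (p + d (φ n)) = 0 := by
      have : p + d (φ n) = q (φ n) := by simp [hd]
      rw [this]; exact hgS _ (hq (φ n)).1
    simp [this, hgp]
  rw [show (fun n => c (φ n) • (g (p + d (φ n)) - g p)) = fun _ => (0:ℝ) from funext hval] at hlim
  exact (tendsto_nhds_unique tendsto_const_nhds hlim).symm

/-- If `p` is on a segment from `x'` to `y` ... helper: a point of `Ω ∩ ball p ε` together with
`y ∉ closure Ω` forces `p` on the segment. -/
theorem p_mem_segment {Ω : Set ℂ} (hΩ : IsOpen Ω) {p y x' : ℂ} {ε : ℝ}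
    (hfr : ∀ z ∈ Metric.ball p ε, z ∈ frontier Ω → z = p)
    (hx' : x' ∈ Ω) (hx'b : x' ∈ Metric.ball p ε)
    (hyb : y ∈ Metric.ball p ε) (hyc : y ∉ closure Ω) :
    p ∈ segment ℝ x' y := by
  by_contra hp
  have hseg : segment ℝ x' y ⊆ Metric.ball p ε :=
    (convex_ball p ε).segment_subset hx'b hyb
  have hsub : segment ℝ x' y ⊆ Ω ∪ (closure Ω)ᶜ := by
    intro z hz
    by_cases hzΩ : z ∈ Ω
    · exact Or.inl hzΩ
    by_cases hzc : z ∈ closure Ω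
    · exfalso
      have hzfr : z ∈ frontier Ω := by
        rw [frontier, hΩ.interior_eq]
        exact ⟨hzc, hzΩ⟩
      exact hp ((hfr z (hseg hz) hzfr) ▸ hz)
    · exact Or.inr hzc
  have hpre : IsPreconnected (segment ℝ x' y) := (convex_segment x' y).isPreconnected
  have := hpre Ω (closure Ω)ᶜ hΩ (isClosed_closure).isOpen_compl hsub
    ⟨x', left_mem_segment ℝ x' y, hx'⟩ ⟨y, right_mem_segment ℝ x' y, hyc⟩
  obtain ⟨z, _, hz1, hz2⟩ := this
  exact hz2 (subset_closure hz1)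

/-- Every frontier point of `Ω` is an accumulation point of the frontier, given a solution. -/
theorem frontier_acc {Ω : Set ℂ} (hΩ : IsOpen Ω) {p : ℂ} (hp : p ∈ frontier Ω)
    {u : ℂ → ℝ} (hup : u p = 0) (hupos : ∀ z ∈ Ω, 0 < u z)
    (hg : gradNorm u p = 1) : ∃ᶠ z in 𝓝[≠] p, z ∈ frontier Ω := by
  by_contra hfreq
  rw [not_frequently] at hfreq
  have hfreq' : ∀ᶠ z in 𝓝 p, z ≠ p → z ∉ frontier Ω := by
    rwa [eventually_nhdsWithin_iff] at hfreq
  obtain ⟨ε, hε, hball⟩ := Metric.eventually_nhds_iff.1 hfreq'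
  -- frontier points in the ball equal p
  have hfr : ∀ z ∈ Metric.ball p ε, z ∈ frontier Ω → z = p := by
    intro z hz hzf
    by_contra hzp
    exact hball (Metric.mem_ball.1 hz) hzp hzf
  -- the ball is contained in the closure of Ω
  have hsubcl : Metric.ball p ε ⊆ closure Ω := by
    intro y hy
    by_contra hyc
    have hyp : y ≠ p := fun h => hyc (h ▸ frontier_subset_closure hp)
    -- a point of Ω in the ball
    obtain ⟨x, hxball, hxΩ⟩ := _root_.mem_closure_iff.1 (frontier_subset_closure hp)
      (Metric.ball p ε) Metric.isOpen_ball (Metric.mem_ball_self hε)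
    obtain ⟨δ, hδ, hδball⟩ := Metric.isOpen_iff.1 (hΩ.inter Metric.isOpen_ball) x ⟨hxΩ, hxball⟩
    set d : ℂ := p - y with hd
    have hdne : d ≠ 0 := sub_ne_zero.2 (Ne.symm hyp)
    have habs : ‖d‖ ≠ 0 := norm_ne_zero_iff.2 hdne
    set w : ℂ := (↑(δ / (2 * ‖d‖)) : ℂ) * (Complex.I * d) with hw
    have hwabs : ‖w‖ = δ / 2 := by
      rw [hw, norm_mul, norm_mul, Complex.norm_I, Complex.norm_real, Real.norm_eq_abs, one_mul,
        _root_.abs_of_nonneg (by positivity : (0:ℝ) ≤ δ / (2 * ‖d‖))]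
      field_simp
    have hx1 : x + w ∈ Ω ∩ Metric.ball p ε := by
      apply hδball
      simp [Metric.mem_ball, dist_eq, hwabs]
      linarith
    have hx2 : x - w ∈ Ω ∩ Metric.ball p ε := by
      apply hδball
      simp only [Metric.mem_ball, dist_eq]
      rw [show x - w - x = -w by ring, norm_neg, hwabs]
      linarith
    -- both give p on the segments to y
    have hs1 := p_mem_segment hΩ hfr hx1.1 hx1.2 hy hyc
    have hs2 := p_mem_segment hΩ hfr hx2.1 hx2.2 hy hyc
    -- translate into scalar equations
    have key : ∀ x' : ℂ, x' ∈ Ω → p ∈ segment ℝ x' y → ∃ r : ℝ, x' - y = r • d := by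
      intro x' hx'Ω hmem
      rw [segment_eq_image] at hmem
      obtain ⟨t, ht01, htp⟩ := hmem
      have htne : 1 - t ≠ 0 := by
        intro h
        have ht1 : t = 1 := by linarith
        rw [ht1] at htp
        simp at htp
        exact hyp htp
      refine ⟨(1 - t)⁻¹, ?_⟩
      have hpy : (1 - t) • (x' - y) = d := by
        rw [hd, ← htp]
        ring_nf
        rw [smul_sub, sub_eq_iff_eq_add]
        simp [smul_eq_mul, real_smul]
        ring
      rw [← hpy, smul_smul, inv_mul_cancel₀ htne, one_smul]
    obtain ⟨r1, hr1⟩ := key _ hx1.1 hs1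
    obtain ⟨r2, hr2⟩ := key _ hx2.1 hs2
    have hsub : ((r1 - r2 : ℝ) : ℂ) * d = 2 * w := by
      have : (x + w - y) - (x - w - y) = 2 * w := by ring
      rw [← this, hr1, hr2]
      push_cast
      simp [real_smul]
      ring
    rw [hw] at hsub
    have hcan : ((r1 - r2 : ℝ) : ℂ) = 2 * (↑(δ / (2 * ‖d‖)) : ℂ) * Complex.I := by
      apply mul_right_cancel₀ hdne
      rw [hsub]; ring
    have habspos : 0 < ‖d‖ := norm_pos_iff.2 hdne
    have him : (0:ℝ) = 2 * (δ / (2 * ‖d‖)) := by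
      have h := congrArg Complex.im hcan
      rw [Complex.ofReal_im] at h
      rw [h]
      simp only [Complex.mul_im, Complex.mul_re, Complex.I_re, Complex.I_im,
        Complex.ofReal_re, Complex.ofReal_im, Complex.re_ofNat, Complex.im_ofNat,
        mul_zero, mul_one, zero_mul, sub_zero, add_zero, zero_add, zero_sub]
    have : 0 < δ / (2 * ‖d‖) := div_pos hδ (mul_pos two_pos habspos)
    linarith
  -- now `u` has a local minimum at p
  have hmin : IsLocalMin u p := by
    filter_upwards [Metric.ball_mem_nhds p hε] with z hz
    rcases eq_or_ne z p with rfl | hzp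
    · exact le_refl _
    · have hzΩ : z ∈ Ω := by
        have hzc : z ∈ interior Ω ∪ frontier Ω := by
          rw [← closure_eq_interior_union_frontier]
          exact hsubcl hz
        rcases hzc with h | h
        · rwa [hΩ.interior_eq] at h
        · exact absurd (hfr z hz h) hzp
      rw [hup]
      exact (hupos z hzΩ).le
  have hderiv : fderiv ℝ u p = 0 := hmin.fderiv_eq_zero
  rw [gradNorm, ux, uy, hderiv] at hg
  simp at hg

/-- A function with vanishing differential on an open preconnected set is constant there. -/
theorem const_on_open_preconnected {Ω : Set ℂ} (hΩ : IsOpen Ω) (hconn : IsPreconnected Ω)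
    {w : ℂ → ℝ} (hdiff : ∀ z ∈ Ω, DifferentiableAt ℝ w z)
    (hder : ∀ z ∈ Ω, fderiv ℝ w z = 0) {x y : ℂ} (hx : x ∈ Ω) (hy : y ∈ Ω) : w x = w y := by
  have hloc : ∀ z ∈ Ω, ∃ ε > 0, Metric.ball z ε ⊆ Ω ∧ ∀ a ∈ Metric.ball z ε, w a = w z := by
    intro z hz
    obtain ⟨ε, hε, hball⟩ := Metric.isOpen_iff.1 hΩ z hz
    refine ⟨ε, hε, hball, fun a ha => ?_⟩
    apply (convex_ball z ε).is_const_of_fderivWithin_eq_zero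
      (fun b hb => (hdiff b (hball hb)).differentiableWithinAt) ?_ ha (Metric.mem_ball_self hε)
    intro b hb
    rw [fderivWithin_of_isOpen Metric.isOpen_ball hb]
    exact hder b (hball hb)
  by_contra hne
  set O1 : Set ℂ := {z | z ∈ Ω ∧ w z = w x} with hO1
  set O2 : Set ℂ := {z | z ∈ Ω ∧ w z ≠ w x} with hO2
  have ho1 : IsOpen O1 := by
    rw [Metric.isOpen_iff]
    rintro z ⟨hzΩ, hzw⟩
    obtain ⟨ε, hε, hsub, hconst⟩ := hloc z hzΩ
    exact ⟨ε, hε, fun a ha => ⟨hsub ha, (hconst a ha).trans hzw⟩⟩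
  have ho2 : IsOpen O2 := by
    rw [Metric.isOpen_iff]
    rintro z ⟨hzΩ, hzw⟩
    obtain ⟨ε, hε, hsub, hconst⟩ := hloc z hzΩ
    exact ⟨ε, hε, fun a ha => ⟨hsub ha, fun h => hzw (((hconst a ha).symm).trans h)⟩⟩
  have hcover : Ω ⊆ O1 ∪ O2 := by
    intro z hz
    by_cases h : w z = w x
    · exact Or.inl ⟨hz, h⟩
    · exact Or.inr ⟨hz, h⟩
  obtain ⟨z, _, hz1, hz2⟩ := hconn O1 O2 ho1 ho2 hcover ⟨x, hx, hx, rfl⟩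
    ⟨y, hy, hy, fun h => hne h.symm⟩
  exact hz2.2 hz1.2

/-- Uniqueness of the solution to the overdetermined problem (1):
two solutions extending harmonically to a neighborhood of the closure agree on `Ω`. -/
theorem exceptional_solution_unique (Ω U : Set ℂ) (u v : ℂ → ℝ)
    (hΩ : IsOpen Ω) (hconn : IsConnected Ω) (hfr : (frontier Ω).Nonempty)
    (hU : IsOpen U) (hclos : closure Ω ⊆ U)
    (hu : HarmonicOnD u U) (hv : HarmonicOnD v U)
    (hupos : ∀ z ∈ Ω, 0 < u z) (hvpos : ∀ z ∈ Ω, 0 < v z)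
    (hub : ∀ z ∈ frontier Ω, u z = 0) (hvb : ∀ z ∈ frontier Ω, v z = 0)
    (hug : ∀ z ∈ frontier Ω, gradNorm u z = 1)
    (hvg : ∀ z ∈ frontier Ω, gradNorm v z = 1) :
    Set.EqOn u v Ω := by
  obtain ⟨p₀, hp₀⟩ := hfr
  obtain ⟨x₀, hx₀⟩ := hconn.nonempty
  -- differentiability of u and v on U
  have hudiff : ∀ z ∈ U, DifferentiableAt ℝ u z := fun z hz =>
    (hu.1.differentiableOn two_ne_zero z hz).differentiableAt (hU.mem_nhds hz)
  have hvdiff : ∀ z ∈ U, DifferentiableAt ℝ v z := fun z hz =>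
    (hv.1.differentiableOn two_ne_zero z hz).differentiableAt (hU.mem_nhds hz)
  have hΩU : Ω ⊆ U := fun z hz => hclos (subset_closure hz)
  have hfrU : frontier Ω ⊆ U := fun z hz => hclos (frontier_subset_closure hz)
  -- the ± alternative at every frontier point
  have hpm : ∀ p ∈ frontier Ω, hol u p = hol v p ∨ hol u p = -hol v p := by
    intro p hp
    have hfu : ∃ᶠ z in 𝓝[≠] p, z ∈ frontier Ω :=
      frontier_acc hΩ hp (hub p hp) hupos (hug p hp)
    obtain ⟨t, ht, hT⟩ := exists_tangent hfu
    have h1 : (hol u p * t).re = 0 := by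
      rw [← fderiv_eq_re_mul]
      exact hT u (hudiff p (hfrU hp)) (hub p hp) hub
    have h2 : (hol v p * t).re = 0 := by
      rw [← fderiv_eq_re_mul]
      exact hT v (hvdiff p (hfrU hp)) (hvb p hp) hvb
    exact pm_of ht (by rw [abs_hol]; exact hug p hp) (by rw [abs_hol]; exact hvg p hp) h1 h2
  -- the connected component of U containing the closure of Ω
  set V : Set ℂ := connectedComponentIn U p₀ with hV
  have hp₀U : p₀ ∈ U := hfrU hp₀
  have hVopen : IsOpen V := hU.connectedComponentIn
  have hVpre : IsPreconnected V := isPreconnected_connectedComponentIn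
  have hVsub : V ⊆ U := connectedComponentIn_subset U p₀
  have hclosV : closure Ω ⊆ V :=
    hconn.closure.isPreconnected.subset_connectedComponentIn
      (frontier_subset_closure hp₀) hclos
  have hp₀V : p₀ ∈ V := mem_connectedComponentIn hp₀U
  -- analyticity
  have hfa : AnalyticOnNhd ℂ (hol u) V :=
    ((hol_differentiableOn u U hU hu).mono hVsub).analyticOnNhd hVopen
  have hga : AnalyticOnNhd ℂ (hol v) V :=
    ((hol_differentiableOn v U hU hv).mono hVsub).analyticOnNhd hVopen
  -- frequently near p₀ one of the two alternatives holds
  have hacc : ∃ᶠ z in 𝓝[≠] p₀, z ∈ frontier Ω :=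
    frontier_acc hΩ hp₀ (hub p₀ hp₀) hupos (hug p₀ hp₀)
  have hor : (∃ᶠ z in 𝓝[≠] p₀, hol u z - hol v z = 0) ∨
      (∃ᶠ z in 𝓝[≠] p₀, hol u z + hol v z = 0) := by
    apply frequently_or_distrib.1
    apply hacc.mono
    intro z hz
    rcases hpm z hz with h | h
    · exact Or.inl (sub_eq_zero.2 h)
    · exact Or.inr (by rw [h]; ring)
  -- boundary-limit argument, used in both cases
  have hnb : (𝓝[Ω] p₀).NeBot :=
    mem_closure_iff_nhdsWithin_neBot.1 (frontier_subset_closure hp₀)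
  rcases hor with hfreq | hfreq
  · -- case hol u = hol v on V
    have hid : Set.EqOn (fun z => hol u z - hol v z) 0 V :=
      (hfa.sub hga).eqOn_zero_of_preconnected_of_frequently_eq_zero hVpre hp₀V hfreq
    set w : ℂ → ℝ := fun z => u z - v z with hw
    have hwd : ∀ z ∈ U, DifferentiableAt ℝ w z := fun z hz =>
      (hudiff z hz).sub (hvdiff z hz)
    have hwder : ∀ z ∈ Ω, fderiv ℝ w z = 0 := by
      intro z hz
      have hz' : z ∈ V := hclosV (subset_closure hz)
      have heq : hol u z = hol v z := sub_eq_zero.1 (hid hz')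
      rw [hw]
      rw [fderiv_fun_sub (hudiff z (hΩU hz)) (hvdiff z (hΩU hz)), fderiv_eq_of_hol_eq heq,
        sub_self]
    have hconst : ∀ z ∈ Ω, w z = w x₀ := fun z hz =>
      const_on_open_preconnected hΩ hconn.isPreconnected (fun a ha => hwd a (hΩU ha))
        hwder hz hx₀
    -- boundary value
    have hcw : ContinuousAt w p₀ := ((hudiff p₀ hp₀U).sub (hvdiff p₀ hp₀U)).continuousAt
    have h1 : Tendsto w (𝓝[Ω] p₀) (𝓝 (w p₀)) := hcw.continuousWithinAt.tendsto
    have h2 : Tendsto w (𝓝[Ω] p₀) (𝓝 (w x₀)) := by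
      refine Tendsto.congr' ?_ (tendsto_const_nhds (x := w x₀) (f := 𝓝[Ω] p₀))
      filter_upwards [self_mem_nhdsWithin] with z hz
      exact (hconst z hz).symm
    have hwp₀ : w p₀ = 0 := by
      simp only [hw]
      rw [hub p₀ hp₀, hvb p₀ hp₀, sub_zero]
    have hc0 : w x₀ = 0 := by
      have := tendsto_nhds_unique h2 h1
      rw [this, hwp₀]
    intro z hz
    have := (hconst z hz).trans hc0
    exact sub_eq_zero.1 this
  · -- case hol u = -hol v on V : contradiction with positivity
    exfalso
    have hid : Set.EqOn (fun z => hol u z + hol v z) 0 V :=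
      (hfa.add hga).eqOn_zero_of_preconnected_of_frequently_eq_zero hVpre hp₀V hfreq
    set w : ℂ → ℝ := fun z => u z + v z with hw
    have hwd : ∀ z ∈ U, DifferentiableAt ℝ w z := fun z hz =>
      (hudiff z hz).add (hvdiff z hz)
    have hwder : ∀ z ∈ Ω, fderiv ℝ w z = 0 := by
      intro z hz
      have hz' : z ∈ V := hclosV (subset_closure hz)
      have heq : hol u z = -hol v z := by
        have := hid hz'
        simp only [Pi.zero_apply] at this
        linear_combination this
      rw [hw]
      rw [fderiv_fun_add (hudiff z (hΩU hz)) (hvdiff z (hΩU hz)), fderiv_neg_of_hol_neg heq,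
        neg_add_cancel]
    have hconst : ∀ z ∈ Ω, w z = w x₀ := fun z hz =>
      const_on_open_preconnected hΩ hconn.isPreconnected (fun a ha => hwd a (hΩU ha))
        hwder hz hx₀
    have hcw : ContinuousAt w p₀ := ((hudiff p₀ hp₀U).add (hvdiff p₀ hp₀U)).continuousAt
    have h1 : Tendsto w (𝓝[Ω] p₀) (𝓝 (w p₀)) := hcw.continuousWithinAt.tendsto
    have h2 : Tendsto w (𝓝[Ω] p₀) (𝓝 (w x₀)) := by
      refine Tendsto.congr' ?_ (tendsto_const_nhds (x := w x₀) (f := 𝓝[Ω] p₀))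
      filter_upwards [self_mem_nhdsWithin] with z hz
      exact (hconst z hz).symm
    have hwp₀ : w p₀ = 0 := by
      simp only [hw]
      rw [hub p₀ hp₀, hvb p₀ hp₀, add_zero]
    have hc0 : w x₀ = 0 := by
      have := tendsto_nhds_unique h2 h1
      rw [this, hwp₀]
    have := hupos x₀ hx₀
    have := hvpos x₀ hx₀
    simp only [hw] at hc0
    linarith
end

section
/- (Fuchs' theorem, special case) Let Ω be an unbounded region of ℂ, and let f be holomorphic and bounded in Ω with limsup |f(z)| ≤ 1 as z approaches any boundary point ζ ∈ ∂Ω from inside Ω. Then |f(z)| ≤ 1 for all z in Ω. -/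
open Set Filter Bornology Topology

/-- Maximum principle for a bounded open set, with eventual bounds near each frontier point. -/
lemma fuchs_aux_max {U : Set ℂ} {g : ℂ → ℂ} {C : ℝ} (hU : IsOpen U) (hUb : IsBounded U)
    (hg : DifferentiableOn ℂ g U)
    (hfr : ∀ ζ ∈ frontier U, ∀ᶠ w in nhdsWithin ζ U, ‖g w‖ ≤ C) :
    ∀ w ∈ U, ‖g w‖ ≤ C := by
  by_contra hcon
  push_neg at hcon
  obtain ⟨w₀, hw₀U, hw₀⟩ := hcon
  set T : Set ℂ := {w | w ∈ U ∧ ‖g w₀‖ ≤ ‖g w‖} with hT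
  have hTU : T ⊆ U := fun w hw => hw.1
  have hclT : closure T ⊆ T := by
    intro ζ hζ
    have hζU' : ζ ∈ closure U := closure_mono hTU hζ
    have hneT : (nhdsWithin ζ T).NeBot := mem_closure_iff_nhdsWithin_neBot.mp hζ
    have hζU : ζ ∈ U := by
      by_contra h
      have hfr' : ζ ∈ frontier U := ⟨hζU', by simpa [hU.interior_eq] using h⟩
      have h2 : ∀ᶠ w in nhdsWithin ζ T, ‖g w‖ ≤ C :=
        (hfr ζ hfr').filter_mono (nhdsWithin_mono ζ hTU)
      have h3 : ∀ᶠ w in nhdsWithin ζ T, ‖g w₀‖ ≤ ‖g w‖ :=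
        eventually_mem_nhdsWithin.mono fun w hw => hw.2
      obtain ⟨w, hw2, hw3⟩ := (h2.and h3).exists
      linarith
    refine ⟨hζU, ?_⟩
    have hct : Tendsto (fun w => ‖g w‖) (nhdsWithin ζ T) (𝓝 ‖g ζ‖) :=
      ((hg ζ hζU).continuousWithinAt.mono hTU).norm
    exact ge_of_tendsto hct (eventually_mem_nhdsWithin.mono fun w hw => hw.2)
  have hTclosed : IsClosed T := isClosed_of_closure_subset hclT
  have hTcomp : IsCompact T := Metric.isCompact_of_isClosed_isBounded hTclosed (hUb.subset hTU)
  have hTne : T.Nonempty := ⟨w₀, hw₀U, le_refl _⟩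
  obtain ⟨c, hcT, hmax⟩ := hTcomp.exists_isMaxOn hTne ((hg.continuousOn.mono hTU).norm)
  have hcU : c ∈ U := hTU hcT
  have hglobal : IsMaxOn (norm ∘ g) U c := by
    intro w hw
    by_cases hwT : w ∈ T
    · exact hmax hwT
    · have h1 : ¬ ‖g w₀‖ ≤ ‖g w‖ := fun h => hwT ⟨hw, h⟩
      exact le_trans (le_of_lt (lt_of_not_ge h1)) (le_trans hcT.2 (le_refl _))
  set U₀ := connectedComponentIn U c with hU₀def
  have hU₀o : IsOpen U₀ := hU.connectedComponentIn
  have hsub : U₀ ⊆ U := connectedComponentIn_subset U c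
  have hcU₀ : c ∈ U₀ := mem_connectedComponentIn hcU
  have heq : EqOn (norm ∘ g) (Function.const ℂ ‖g c‖) U₀ :=
    Complex.norm_eqOn_of_isPreconnected_of_isMaxOn isPreconnected_connectedComponentIn hU₀o
      (hg.mono hsub) hcU₀ (fun w hw => hglobal (hsub hw))
  have hU₀ne : U₀.Nonempty := ⟨c, hcU₀⟩
  have hU₀nuniv : U₀ ≠ univ := by
    intro h
    obtain ⟨R, hR⟩ := ((hUb.subset hsub).subset_closedBall 0)
    have := hR (h ▸ mem_univ ((|R| + 1 : ℝ) : ℂ))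
    simp only [Metric.mem_closedBall, Complex.dist_eq, sub_zero] at this
    rw [Complex.norm_real, Real.norm_eq_abs] at this
    have : |R| + 1 ≤ R := le_trans (le_abs_self _) this
    have := le_abs_self R
    linarith
  obtain ⟨ζ, hζ⟩ := nonempty_frontier_iff.mpr ⟨hU₀ne, hU₀nuniv⟩
  have hζclU₀ : ζ ∈ closure U₀ := hζ.1
  have hζnU₀ : ζ ∉ U₀ := fun h => hζ.2 (by rwa [hU₀o.interior_eq])
  have hζnU : ζ ∉ U := by
    intro hζU
    have h1 : connectedComponentIn U ζ ∈ 𝓝 ζ :=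
      (hU.connectedComponentIn).mem_nhds (mem_connectedComponentIn hζU)
    obtain ⟨w, hw1, hw2⟩ := mem_closure_iff_nhds.mp hζclU₀ _ h1
    have e1 : connectedComponentIn U ζ = connectedComponentIn U w := connectedComponentIn_eq hw1
    have e2 : U₀ = connectedComponentIn U w := connectedComponentIn_eq hw2
    exact hζnU₀ (e2 ▸ e1 ▸ mem_connectedComponentIn hζU)
  have hζfr : ζ ∈ frontier U := ⟨closure_mono hsub hζclU₀, by simpa [hU.interior_eq]⟩
  have hne : (nhdsWithin ζ U₀).NeBot := mem_closure_iff_nhdsWithin_neBot.mp hζclU₀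
  have h2 : ∀ᶠ w in nhdsWithin ζ U₀, ‖g w‖ ≤ C :=
    (hfr ζ hζfr).filter_mono (nhdsWithin_mono ζ hsub)
  have h3 : ∀ᶠ w in nhdsWithin ζ U₀, ‖g w‖ = ‖g c‖ :=
    eventually_mem_nhdsWithin.mono fun w hw => heq hw
  obtain ⟨w, hw2, hw3⟩ := (h2.and h3).exists
  have hc2 : ‖g w₀‖ ≤ ‖g c‖ := hcT.2
  linarith [hw3 ▸ hw2]

/-- Fuchs' Phragmén–Lindelöf theorem, special case: a bounded holomorphic function on an
unbounded region whose boundary limsup of `|f|` is at most `1` satisfies `|f| ≤ 1`. -/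
theorem fuchs_bounded_case (Ω : Set ℂ) (f : ℂ → ℂ)
    (hΩ : IsOpen Ω) (hconn : IsConnected Ω) (hΩne : Ω ≠ Set.univ)
    (hunb : ¬ Bornology.IsBounded Ω)
    (hf : DifferentiableOn ℂ f Ω)
    (hbdd : ∃ M : ℝ, ∀ z ∈ Ω, ‖f z‖ ≤ M)
    (hbound : ∀ ζ ∈ frontier Ω,
      Filter.limsup (fun z => ‖f z‖) (nhdsWithin ζ Ω) ≤ 1) :
    ∀ z ∈ Ω, ‖f z‖ ≤ 1 := by
  obtain ⟨M₀, hM₀⟩ := hbdd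
  set M : ℝ := max M₀ 1 with hMdef
  have hM1 : (1 : ℝ) ≤ M := le_max_right _ _
  have hM0 : (0 : ℝ) < M := lt_of_lt_of_le one_pos hM1
  have hM : ∀ w ∈ Ω, ‖f w‖ ≤ M := fun w hw => le_trans (hM₀ w hw) (le_max_left _ _)
  have hbu : ∀ ζ : ℂ, IsBoundedUnder (· ≤ ·) (nhdsWithin ζ Ω) (fun w => ‖f w‖) :=
    fun ζ => ⟨M, eventually_map.mpr (eventually_mem_nhdsWithin.mono fun w hw => hM w hw)⟩
  obtain ⟨a, ha⟩ : (frontier Ω).Nonempty := nonempty_frontier_iff.mpr ⟨hconn.nonempty, hΩne⟩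
  intro z hz
  refine le_of_forall_pos_le_add fun ε hε => ?_
  have hε1 : (1 : ℝ) ≤ 1 + ε := by linarith
  -- eventual bound near the frontier point a
  have h1 : ∀ᶠ w in nhdsWithin a Ω, ‖f w‖ < 1 + ε :=
    Filter.eventually_lt_of_limsup_lt (lt_of_le_of_lt (hbound a ha) (by linarith)) (hbu a)
  obtain ⟨δ, hδ0, hδ⟩ := Metric.mem_nhdsWithin_iff.mp h1
  have hδ' : ∀ w ∈ Ω, dist w a < δ → ‖f w‖ < 1 + ε :=
    fun w hw h => hδ ⟨Metric.mem_ball.mpr h, hw⟩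
  by_cases hzδ : dist z a < δ
  · linarith [hδ' z hz hzδ]
  push_neg at hzδ
  set d : ℝ := δ / 2 with hddef
  have hd0 : 0 < d := by positivity
  have hdδ : d < δ := by simp only [hddef]; linarith
  have hdz : d < dist z a := lt_of_lt_of_le hdδ hzδ
  have hdz0 : 0 < dist z a := lt_trans hd0 hdz
  -- key estimate for each n ≥ 1
  have key : ∀ n : ℕ, 1 ≤ n →
      ‖f z‖ ≤ (1 + ε) * (dist z a / d) ^ ((n : ℝ)⁻¹) := by
    intro n hn
    have hMn1 : (1 : ℝ) ≤ M ^ n := one_le_pow₀ hM1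
    have hMn0 : (0 : ℝ) < M ^ n := lt_of_lt_of_le one_pos hMn1
    set R : ℝ := max (d * M ^ n + 1) (dist z a + 1) with hRdef
    have hR1 : d * M ^ n < R := lt_of_lt_of_le (lt_add_one _) (le_max_left _ _)
    have hR2 : dist z a < R := lt_of_lt_of_le (lt_add_one _) (le_max_right _ _)
    have hdR : d < R := lt_of_le_of_lt (le_mul_of_one_le_right hd0.le hMn1) hR1
    set U : Set ℂ := Ω ∩ {w | d < dist w a ∧ dist w a < R} with hUdef
    have hUopen : IsOpen U := hΩ.inter
      ((isOpen_lt continuous_const (continuous_id.dist continuous_const)).inter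
        (isOpen_lt (continuous_id.dist continuous_const) continuous_const))
    have hUb : IsBounded U :=
      Metric.isBounded_ball.subset (fun w hw => Metric.mem_ball.mpr hw.2.2)
    set g : ℂ → ℂ := fun w => (f w) ^ n * ((d : ℂ) / (w - a)) with hgdef
    have hwa : ∀ w ∈ U, w ≠ a := by
      intro w hw h
      rw [h] at hw
      have h2 := hw.2.1
      rw [dist_self] at h2
      linarith
    have hgd : DifferentiableOn ℂ g U := by
      refine DifferentiableOn.mul ((hf.mono inter_subset_left).pow n) ?_
      exact (differentiableOn_const _).div (differentiableOn_id.sub (differentiableOn_const _))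
        (fun w hw => sub_ne_zero.mpr (hwa w hw))
    have hgnorm : ∀ w ∈ U, ‖g w‖ = (‖f w‖) ^ n * (d / dist w a) := by
      intro w hw
      rw [hgdef]
      simp only [norm_mul, norm_pow, norm_div, Complex.dist_eq,
        Complex.norm_real, Real.norm_eq_abs, abs_of_pos hd0]
    set C : ℝ := (1 + ε) ^ n with hCdef
    have hC1 : (1 : ℝ) ≤ C := one_le_pow₀ hε1
    have hsmall : ∀ w ∈ U, ‖f w‖ < 1 + ε → ‖g w‖ ≤ C := by
      intro w hw hfw
      rw [hgnorm w hw]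
      have h2 : d / dist w a ≤ 1 := div_le_one_of_le₀ hw.2.1.le dist_nonneg
      calc (‖f w‖) ^ n * (d / dist w a)
          ≤ (1 + ε) ^ n * 1 := by
            refine mul_le_mul (pow_le_pow_left₀ (norm_nonneg _) hfw.le n) h2
              (div_nonneg hd0.le dist_nonneg) (pow_nonneg (by linarith) n)
        _ = C := mul_one _
    have hfrU : ∀ ζ ∈ frontier U, ∀ᶠ w in nhdsWithin ζ U, ‖g w‖ ≤ C := by
      intro ζ hζ
      have hζcl : ζ ∈ closure U := hζ.1
      have hζnotU : ζ ∉ U := fun h => hζ.2 (by rwa [hUopen.interior_eq])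
      have hUmem : ∀ᶠ w in nhdsWithin ζ U, w ∈ U := eventually_mem_nhdsWithin
      rcases lt_or_ge (dist ζ a) δ with hcase | hcase
      · -- close to a : use the bound 1+ε near a
        have hball : ∀ᶠ w in nhdsWithin ζ U, dist w a < δ :=
          (((isOpen_lt (continuous_id.dist continuous_const) continuous_const).eventually_mem
            hcase).filter_mono nhdsWithin_le_nhds)
        filter_upwards [hball, hUmem] with w hw1 hw2
        exact hsmall w hw2 (hδ' w hw2.1 hw1)
      · by_cases hζΩ : ζ ∈ Ω
        · -- outer sphere : dist ζ a = R
          have hge : R ≤ dist ζ a := by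
            by_contra h
            push_neg at h
            exact hζnotU ⟨hζΩ, lt_of_lt_of_le hdδ hcase, h⟩
          have hgt : d * M ^ n < dist ζ a := lt_of_lt_of_le hR1 hge
          have hopen : ∀ᶠ w in nhdsWithin ζ U, d * M ^ n < dist w a :=
            (((isOpen_lt continuous_const (continuous_id.dist continuous_const)).eventually_mem
              hgt).filter_mono nhdsWithin_le_nhds)
          filter_upwards [hopen, hUmem] with w hw1 hw2
          rw [hgnorm w hw2]
          have hfw : ‖f w‖ ≤ M := hM w hw2.1
          have hdd : d / dist w a ≤ d / (d * M ^ n) :=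
            div_le_div_of_nonneg_left hd0.le (by positivity) hw1.le
          have hdd2 : d / (d * M ^ n) = (M ^ n)⁻¹ := by
            field_simp
          calc (‖f w‖) ^ n * (d / dist w a)
              ≤ M ^ n * (M ^ n)⁻¹ := by
                refine mul_le_mul (pow_le_pow_left₀ (norm_nonneg _) hfw n)
                  (hdd2 ▸ hdd) (div_nonneg hd0.le dist_nonneg) (pow_nonneg hM0.le n)
            _ = 1 := mul_inv_cancel₀ (ne_of_gt hMn0)
            _ ≤ C := hC1
        · -- a genuine frontier point of Ω
          have hζclΩ : ζ ∈ closure Ω := closure_mono inter_subset_left hζcl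
          have hζfrΩ : ζ ∈ frontier Ω := ⟨hζclΩ, by rwa [hΩ.interior_eq]⟩
          have h1 : ∀ᶠ w in nhdsWithin ζ Ω, ‖f w‖ < 1 + ε :=
            Filter.eventually_lt_of_limsup_lt
              (lt_of_le_of_lt (hbound ζ hζfrΩ) (by linarith)) (hbu ζ)
          have h1' : ∀ᶠ w in nhdsWithin ζ U, ‖f w‖ < 1 + ε :=
            h1.filter_mono (nhdsWithin_mono ζ inter_subset_left)
          filter_upwards [h1', hUmem] with w hw1 hw2
          exact hsmall w hw2 hw1
    have hzU : z ∈ U := ⟨hz, hdz, hR2⟩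
    have hgz : ‖g z‖ ≤ C := fuchs_aux_max hUopen hUb hgd hfrU z hzU
    rw [hgnorm z hzU] at hgz
    -- turn into the n-th root bound
    have hx : (‖f z‖) ^ n ≤ (1 + ε) ^ n * (dist z a / d) := by
      rw [← le_div_iff₀ (by positivity : (0:ℝ) < d / dist z a)] at hgz
      rw [div_div_eq_mul_div] at hgz
      calc (‖f z‖) ^ n ≤ (1 + ε) ^ n * dist z a / d := hgz
        _ = (1 + ε) ^ n * (dist z a / d) := by ring
    have hn0 : (n : ℝ) ≠ 0 := Nat.cast_ne_zero.mpr (by omega)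
    have ht0 : (0 : ℝ) ≤ dist z a / d := by positivity
    have root : ∀ y : ℝ, 0 ≤ y → (y ^ n) ^ ((n : ℝ)⁻¹) = y := by
      intro y hy
      rw [← Real.rpow_natCast y n, ← Real.rpow_mul hy, mul_inv_cancel₀ hn0, Real.rpow_one]
    calc ‖f z‖
        = ((‖f z‖) ^ n) ^ ((n : ℝ)⁻¹) := (root _ (norm_nonneg _)).symm
      _ ≤ ((1 + ε) ^ n * (dist z a / d)) ^ ((n : ℝ)⁻¹) :=
          Real.rpow_le_rpow (pow_nonneg (norm_nonneg _) n) hx (by positivity)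
      _ = (1 + ε) * (dist z a / d) ^ ((n : ℝ)⁻¹) := by
          rw [Real.mul_rpow (pow_nonneg (by linarith) n) ht0, root _ (by linarith : (0:ℝ) ≤ 1 + ε)]
  -- take the limit n → ∞
  have ht1 : 0 < dist z a / d := by positivity
  have hinv : Tendsto (fun n : ℕ => ((n : ℝ))⁻¹) atTop (𝓝 0) :=
    tendsto_inv_atTop_zero.comp tendsto_natCast_atTop_atTop
  have h2 : Tendsto (fun n : ℕ => Real.log (dist z a / d) * ((n : ℝ))⁻¹) atTop (𝓝 0) := by
    simpa using hinv.const_mul (Real.log (dist z a / d))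
  have h3 : Tendsto (fun n : ℕ => (dist z a / d) ^ ((n : ℝ)⁻¹)) atTop (𝓝 1) := by
    have h4 := (Real.continuous_exp.tendsto 0).comp h2
    rw [Real.exp_zero] at h4
    refine h4.congr fun n => ?_
    rw [Function.comp_apply, ← Real.rpow_def_of_pos ht1]
  have tendmain : Tendsto (fun n : ℕ => (1 + ε) * (dist z a / d) ^ ((n : ℝ)⁻¹)) atTop
      (𝓝 (1 + ε)) := by
    have := h3.const_mul (1 + ε)
    simpa using this
  exact ge_of_tendsto tendmain (eventually_atTop.mpr ⟨1, fun n hn => key n hn⟩)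
end

section
/- Consider the curve γ parametrized by x(t) = 2 arctan( sin(2α) / (t² + cos(2α)) ), y(t) = cos α · log( (t² + 2 sin α · t + 1)/(t² − 2 sin α · t + 1) ) for t ∈ ℝ, where α ∈ (0, π/2). Then γ satisfies the implicit equation cos²α · cosh( y / cos α ) = sin²α + cos( 2α − x ). -/
set_option maxHeartbeats 1000000


open Real

lemma cos_two_arctan (u : ℝ) : Real.cos (2 * Real.arctan u) = (1 - u ^ 2) / (1 + u ^ 2) := by
  have h : (0:ℝ) < 1 + u ^ 2 := by positivity
  have hsq : Real.sqrt (1 + u ^ 2) ^ 2 = 1 + u ^ 2 := Real.sq_sqrt h.le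
  have hne : Real.sqrt (1 + u ^ 2) ≠ 0 := by positivity
  rw [Real.cos_two_mul, Real.cos_arctan, div_pow, one_pow, hsq]
  field_simp
  ring

lemma sin_two_arctan (u : ℝ) : Real.sin (2 * Real.arctan u) = 2 * u / (1 + u ^ 2) := by
  have h : (0:ℝ) < 1 + u ^ 2 := by positivity
  have hsq : Real.sqrt (1 + u ^ 2) ^ 2 = 1 + u ^ 2 := Real.sq_sqrt h.le
  have hne : Real.sqrt (1 + u ^ 2) ≠ 0 := by positivity
  rw [Real.sin_two_mul, Real.sin_arctan, Real.cos_arctan]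
  field_simp
  rw [hsq]

/-- The parametrized boundary curve of the exceptional domain associated to the
horizontal Scherk surface satisfies the implicit equation
`cos²α · cosh(y/cos α) = sin²α + cos(2α − x)`. -/
theorem scherk_curve_implicit (α t : ℝ) (hα : α ∈ Set.Ioo 0 (π / 2))
    (ht : t ^ 2 + Real.cos (2 * α) ≠ 0) :
    Real.cos α ^ 2 *
        Real.cosh ((Real.cos α *
          Real.log ((t ^ 2 + 2 * Real.sin α * t + 1) /
            (t ^ 2 - 2 * Real.sin α * t + 1))) / Real.cos α) =
      Real.sin α ^ 2 +
        Real.cos (2 * α -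
          2 * Real.arctan (Real.sin (2 * α) / (t ^ 2 + Real.cos (2 * α)))) := by
  obtain ⟨h0, h1⟩ := hα
  have hc : 0 < Real.cos α := Real.cos_pos_of_mem_Ioo ⟨by linarith [Real.pi_pos], h1⟩
  have hpy : Real.sin α ^ 2 + Real.cos α ^ 2 = 1 := Real.sin_sq_add_cos_sq α
  have hA : 0 < t ^ 2 + 2 * Real.sin α * t + 1 := by
    nlinarith [sq_nonneg (t + Real.sin α), mul_pos hc hc]
  have hB : 0 < t ^ 2 - 2 * Real.sin α * t + 1 := by
    nlinarith [sq_nonneg (t - Real.sin α), mul_pos hc hc]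
  rw [mul_div_cancel_left₀ _ hc.ne', Real.cosh_log (div_pos hA hB), Real.cos_sub,
    cos_two_arctan, sin_two_arctan]
  rw [Real.cos_two_mul] at ht ⊢
  rw [Real.sin_two_mul]
  set s := Real.sin α with hs
  set c := Real.cos α with hcc
  set d := t ^ 2 + (2 * c ^ 2 - 1) with hd
  set A := t ^ 2 + 2 * s * t + 1 with hAdef
  set B := t ^ 2 - 2 * s * t + 1 with hBdef
  set u : ℝ := 2 * s * c / d with hu
  have hd2 : (0:ℝ) < d ^ 2 := pow_two_pos_of_ne_zero ht
  have hden : (0:ℝ) < d ^ 2 + 4 * s ^ 2 * c ^ 2 := by nlinarith [sq_nonneg (s * c)]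
  have hAB : A * B = d ^ 2 + 4 * s ^ 2 * c ^ 2 := by
    rw [hAdef, hBdef, hd]
    linear_combination (-4 * t ^ 2 - 4 * c ^ 2) * hpy
  have e1 : (1 - u ^ 2) / (1 + u ^ 2) = (d ^ 2 - 4 * s ^ 2 * c ^ 2) / (A * B) := by
    rw [hAB, hu]
    field_simp
    ring
  have e2 : 2 * u / (1 + u ^ 2) = 4 * s * c * d / (A * B) := by
    rw [hAB, hu]
    field_simp
    ring
  rw [e1, e2, inv_div]
  field_simp
  linear_combination (-2 +4*t^2 +8*t^2*s^2 -2*t^4 +8*c^2 -16*c^2*t^2 -16*c^4) * hpy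
end
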